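/- Let h+1 divide km, let m ≥ h+2, and let U be a maximum h-scattered 𝔽_q-subspace of a k-dimensional 𝔽_{q^m}-vector space 𝕍(k,q^m), i.e. U is h-scattered with dim_{𝔽_q}(U) = km/(h+1). Then a Delsarte dual U^d of U is a maximum (m−h−2)-scattered 𝔽_q-subspace of the (km/(h+1) − k)-dimensional 𝔽_{q^m}-vector space 𝕍(km/(h+1)−k, q^m), i.e. U^d is (m−h−2)-scattered with dim_{𝔽_q}(U^d) = km/(h+1). -/

import Mathlib

set_option linter.unusedSectionVars false
set_option linter.unusedVariables false
set_option maxHeartbeats 1000000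
open Module Submodule


/-- The weight of the `𝔽_{q^m}`-subspace `T` with respect to the `𝔽_q`-subspace `U`:
`w_U(T) = dim_{𝔽_q}(U ∩ T)`. -/
noncomputable def wt {K L V : Type*} [Field K] [Field L] [Algebra K L]
    [AddCommGroup V] [Module K V] [Module L V] [IsScalarTower K L V]
    (U : Submodule K V) (T : Submodule L V) : ℕ :=
  Module.finrank K ↥(U ⊓ T.restrictScalars K)

/-- The defect of `T` with respect to `U`: `ε_U(T) = w_U(T) − dim_{𝔽_{q^m}}(T)`. -/
noncomputable def defect {K L V : Type*} [Field K] [Field L] [Algebra K L]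
    [AddCommGroup V] [Module K V] [Module L V] [IsScalarTower K L V]
    (U : Submodule K V) (T : Submodule L V) : ℤ :=
  (wt U T : ℤ) - Module.finrank L ↥T

/-- `ε_U(r)`: the maximum defect of `r`-dimensional `𝔽_{q^m}`-subspaces w.r.t. `U`. -/
noncomputable def maxDefect {K V : Type*} (L : Type*) [Field K] [Field L] [Algebra K L]
    [AddCommGroup V] [Module K V] [Module L V] [IsScalarTower K L V]
    (U : Submodule K V) (r : ℕ) : ℤ :=
  sSup {e : ℤ | ∃ T : Submodule L V, Module.finrank L ↥T = r ∧ e = defect U T}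

section aux
lemma aux_finrank_sup_singleton {F M : Type*} [Field F] [AddCommGroup M] [Module F M]
    [FiniteDimensional F M] (S : Submodule F M) {u : M} (hu : u ∉ S) :
    Module.finrank F ↥(S ⊔ span F {u}) = Module.finrank F ↥S + 1 := by
  have hinf : S ⊓ span F {u} = ⊥ := by
    rw [eq_bot_iff]
    intro x hx
    obtain ⟨hxS, hxu⟩ := Submodule.mem_inf.1 hx
    rw [Submodule.mem_span_singleton] at hxu
    obtain ⟨c, rfl⟩ := hxu
    rcases eq_or_ne c 0 with rfl | hc
    · simp
    · exact absurd (by simpa [smul_smul, inv_mul_cancel₀ hc] using S.smul_mem c⁻¹ hxS) hu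
  have h0 : u ≠ 0 := fun h => hu (h ▸ S.zero_mem)
  have := Submodule.finrank_sup_add_finrank_inf_eq S (span F {u})
  rw [hinf, finrank_bot, finrank_span_singleton h0] at this
  omega


lemma aux_exists_superspace {F M : Type*} [Field F] [AddCommGroup M] [Module F M]
    [FiniteDimensional F M] :
    ∀ (t d : ℕ) (Z0 : Submodule F M), d - Module.finrank F Z0 = t →
      Module.finrank F Z0 ≤ d → d ≤ Module.finrank F M →
      ∃ Z, Z0 ≤ Z ∧ Module.finrank F Z = d := by
  intro t
  induction t with
  | zero => intro d Z0 ht h1 _; exact ⟨Z0, le_rfl, by omega⟩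
  | succ t ih =>
    intro d Z0 ht h1 h2
    have hlt : Module.finrank F Z0 < d := by omega
    have hne : Z0 ≠ ⊤ := by
      intro h
      rw [h, finrank_top] at hlt
      omega
    obtain ⟨u, hu⟩ : ∃ u, u ∉ Z0 := by
      by_contra hall
      push_neg at hall
      exact hne (Submodule.eq_top_iff'.2 hall)
    obtain ⟨Z, hZ1, hZ2⟩ := ih d (Z0 ⊔ span F {u})
      (by rw [aux_finrank_sup_singleton Z0 hu]; omega)
      (by rw [aux_finrank_sup_singleton Z0 hu]; omega) h2
    exact ⟨Z, le_trans le_sup_left hZ1, hZ2⟩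


lemma aux_trace_ne (K L : Type*) [Field K] [Field L] [Algebra K L] [Fintype K] [Fintype L]
    (μ : L) (h : ∀ θ : L, Algebra.trace K L (θ * μ) = 0) : μ = 0 := by
  apply (traceForm_nondegenerate K L).1 μ
  intro y
  rw [Algebra.traceForm_apply, mul_comm]
  exact h y


lemma aux_tr_alg (K L : Type*) [Field K] [Field L] [Algebra K L] [Fintype K] [Fintype L]
    (x : L) (k : K) : Algebra.trace K L (x * algebraMap K L k) = k * Algebra.trace K L x := by
  rw [mul_comm, ← Algebra.smul_def, map_smul, smul_eq_mul]


lemma aux_subgeo_indep {K L Vn : Type*} [Field K] [Field L] [Algebra K L]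
    [Fintype K] [Fintype L]
    [AddCommGroup Vn] [Module K Vn] [Module L Vn] [IsScalarTower K L Vn]
    {n : ℕ} (bV : Basis (Fin n) L Vn) (W : Submodule K Vn)
    (hcoord : ∀ w ∈ W, ∀ j, bV.repr w j ∈ (algebraMap K L).range)
    {r : ℕ} (w : Fin r → Vn) (hw : ∀ i, w i ∈ W) (hind : LinearIndependent K w) :
    LinearIndependent L w := by
  choose c hc using fun i j => hcoord (w i) (hw i) j
  -- c : Fin r → Fin n → K  with  algebraMap K L (c i j) = bV.repr (w i) j
  have hrep : ∀ (d : Fin r → K) (j : Fin n),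
      bV.repr (∑ i, d i • w i) j = algebraMap K L (∑ i, d i * c i j) := by
    intro d j
    rw [map_sum, Finsupp.finset_sum_apply, map_sum]
    refine Finset.sum_congr rfl fun i _ => ?_
    rw [← algebraMap_smul L (d i) (w i), map_smul, Finsupp.smul_apply, ← hc i j,
      smul_eq_mul, ← map_mul]
  have hcind : LinearIndependent K c := by
    rw [Fintype.linearIndependent_iff]
    intro d hd
    have h0 : ∑ i, d i • w i = 0 := by
      apply bV.repr.injective
      rw [map_zero]
      ext j
      rw [hrep d j]
      have : (∑ i, d i • c i) j = 0 := by rw [hd]; rfl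
      simp only [Finset.sum_apply, Pi.smul_apply, smul_eq_mul] at this
      rw [this, map_zero, Finsupp.coe_zero, Pi.zero_apply]
    exact Fintype.linearIndependent_iff.1 hind d h0
  rw [Fintype.linearIndependent_iff]
  intro μ hμ
  have hcomp : ∀ j, ∑ i, μ i * algebraMap K L (c i j) = 0 := by
    intro j
    have : bV.repr (∑ i, μ i • w i) j = 0 := by rw [hμ, map_zero]; rfl
    rw [map_sum, Finsupp.finset_sum_apply] at this
    simpa only [map_smul, Finsupp.smul_apply, hc, smul_eq_mul] using this
  intro i
  apply aux_trace_ne K L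
  intro θ
  have hθ : ∀ j, ∑ i', (Algebra.trace K L (θ * μ i')) • c i' j = 0 := by
    intro j
    have := congrArg (fun z => Algebra.trace K L (θ * z)) (hcomp j)
    simp only [mul_zero, map_zero] at this
    rw [Finset.mul_sum, map_sum] at this
    rw [← this]
    refine Finset.sum_congr rfl fun i' _ => ?_
    rw [smul_eq_mul, mul_comm (Algebra.trace K L (θ * μ i')) (c i' j),
      ← aux_tr_alg K L (θ * μ i') (c i' j), mul_assoc]
  have : ∑ i', (Algebra.trace K L (θ * μ i')) • c i' = 0 := by
    ext j
    simpa only [Finset.sum_apply, Pi.smul_apply, Pi.zero_apply, smul_eq_mul] using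
      (by simpa only [smul_eq_mul] using hθ j)
  exact Fintype.linearIndependent_iff.1 hcind _ this i


variable {K L Q : Type*} [Field K] [Field L] [Algebra K L]
  [AddCommGroup Q] [Module K Q] [Module L Q] [IsScalarTower K L Q]
  [FiniteDimensional L Q] [FiniteDimensional K L]

lemma aux_star (h : ℕ) (U : Submodule K Q)
    (hUspan : Submodule.span L (U : Set Q) = ⊤) (hhQ : h < Module.finrank L Q)
    (hscat : ∀ T : Submodule L Q, Module.finrank L ↥T = h → wt U T ≤ h) :
    ∀ (t : ℕ) (S : Submodule K Q) (P : Submodule L Q), S ≤ U →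
      S ≤ P.restrictScalars K →
      Module.finrank L P < Module.finrank K S → Module.finrank K S ≤ h + 1 →
      h + 1 - Module.finrank K S = t → False := by
  have : FiniteDimensional K Q := Module.Finite.trans L Q
  intro t
  induction t with
  | zero =>
    intro S P hSU hSP hPS hSh ht
    have hS : Module.finrank K S = h + 1 := by omega
    have hP : Module.finrank L P ≤ h := by omega
    obtain ⟨T, hPT, hT⟩ := aux_exists_superspace (h - Module.finrank L P) h P rfl hP (le_of_lt hhQ)
    have hwt := hscat T hT
    have hle : S ≤ U ⊓ T.restrictScalars K := by
      refine le_inf hSU (le_trans hSP ?_)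
      intro x hx
      exact hPT hx
    have := Submodule.finrank_mono (M := Q) (R := K) hle
    rw [hS] at this
    unfold wt at hwt
    omega
  | succ t ih =>
    intro S P hSU hSP hPS hSh ht
    rcases eq_or_lt_of_le hSh with heq | hlt
    · -- same as base case
      have hP : Module.finrank L P ≤ h := by omega
      obtain ⟨T, hPT, hT⟩ := aux_exists_superspace (h - Module.finrank L P) h P rfl hP (le_of_lt hhQ)
      have hwt := hscat T hT
      have hle : S ≤ U ⊓ T.restrictScalars K := le_inf hSU (le_trans hSP fun x hx => hPT hx)
      have := Submodule.finrank_mono (M := Q) (R := K) hle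
      rw [heq] at this
      unfold wt at hwt
      omega
    · -- extend
      have hUP : ¬ (U : Set Q) ⊆ (P : Set Q) := by
        intro hsub
        have : (⊤ : Submodule L Q) ≤ P := by
          rw [← hUspan]; exact Submodule.span_le.2 hsub
        have : Module.finrank L P = Module.finrank L Q :=
          le_antisymm (Submodule.finrank_le P) (by simpa using Submodule.finrank_mono this)
        omega
      obtain ⟨u, huU, huP⟩ : ∃ u, u ∈ U ∧ u ∉ P := by
        by_contra hc
        push_neg at hc
        exact hUP fun x hx => hc x hx
      have huS : u ∉ S := fun h' => huP (hSP h')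
      have hS' : Module.finrank K ↥(S ⊔ span K {u}) = Module.finrank K S + 1 :=
        aux_finrank_sup_singleton S huS
      have hP' : Module.finrank L ↥(P ⊔ span L {u}) ≤ Module.finrank L P + 1 := by
        have := Submodule.finrank_sup_add_finrank_inf_eq P (span L {u})
        have h1 : Module.finrank L ↥(span L {u}) ≤ 1 := by
          rcases eq_or_ne u 0 with rfl | h0
          · rw [Submodule.span_zero_singleton]; simp
          · rw [finrank_span_singleton h0]
        omega
      refine ih (S ⊔ span K {u}) (P ⊔ span L {u}) (sup_le hSU ?_) ?_ ?_ ?_ ?_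
      · rw [Submodule.span_le, Set.singleton_subset_iff]; exact huU
      · refine sup_le (le_trans hSP ?_) ?_
        · intro x hx
          exact le_sup_left (α := Submodule L Q) hx
        · rw [Submodule.span_le, Set.singleton_subset_iff]
          show u ∈ P ⊔ span L {u}
          exact le_sup_right (α := Submodule L Q) (Submodule.mem_span_singleton_self u)
      · omega
      · omega
      · omega


lemma aux_smul_comm (c : K) (ζ : L) (v : Q) : ζ • c • v = (c • ζ) • v := by
  rw [← algebraMap_smul L c v, smul_smul, mul_comm, ← Algebra.smul_def]


lemma aux_keydep (h : ℕ) (U : Submodule K Q)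
    (hUspan : Submodule.span L (U : Set Q) = ⊤) (hhQ : h < Module.finrank L Q)
    (hscat : ∀ T : Submodule L Q, Module.finrank L ↥T = h → wt U T ≤ h)
    {r : ℕ} (hr : r ≤ h + 1) (ζ : Fin r → L) (hζ : LinearIndependent K ζ)
    (x : Fin r → Q) (hx : ∀ i, x i ∈ U) (hsum : ∑ i, ζ i • x i = 0) :
    ∀ i, x i = 0 := by
  have : FiniteDimensional K Q := Module.Finite.trans L Q
  haveI := Classical.decEq Q
  set S : Submodule K Q := Submodule.span K (Set.range x) with hS
  set P : Submodule L Q := Submodule.span L (Set.range x) with hP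
  have hSU : S ≤ U := Submodule.span_le.2 (Set.range_subset_iff.2 hx)
  have hSP : S ≤ P.restrictScalars K := Submodule.span_le_restrictScalars K L (Set.range x)
  set s := Module.finrank K ↥S with hs
  -- basis of S
  let b := Module.finBasis K ↥S
  let v : Fin s → Q := fun j => (b j : Q)
  have hvS : ∀ j, v j ∈ S := fun j => (b j).2
  have hspanKv : Submodule.span K (Set.range v) = S := by
    have : v = S.subtype ∘ b := rfl
    rw [this, Set.range_comp, Submodule.span_image, b.span_eq, Submodule.map_top,
      Submodule.range_subtype]
  have hvP : ∀ j, v j ∈ P := fun j => hSP (hvS j)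
  have hPv : Submodule.span L (Set.range v) = P := by
    apply le_antisymm
    · exact Submodule.span_le.2 (Set.range_subset_iff.2 hvP)
    · apply Submodule.span_le.2
      intro y hy
      obtain ⟨i, rfl⟩ := hy
      have : x i ∈ S := Submodule.subset_span (Set.mem_range_self i)
      rw [← hspanKv] at this
      exact Submodule.span_le_restrictScalars K L (Set.range v) this
  have hdle : Module.finrank L ↥P ≤ s := by
    rw [← hPv]
    refine le_trans (finrank_span_le_card _) ?_
    rw [Set.toFinset_range]
    exact le_trans (Finset.card_image_le) (by simp)
  have hsr : s ≤ r := by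
    rw [hs, hS]
    refine le_trans (finrank_span_le_card _) ?_
    rw [Set.toFinset_range]
    exact le_trans (Finset.card_image_le) (by simp)
  rcases lt_or_eq_of_le hdle with hlt | heq
  · exact (aux_star h U hUspan hhQ hscat (h + 1 - s) S P hSU hSP hlt (hsr.trans hr) rfl).elim
  · -- v is L-independent
    have hvP' : Submodule.span L (Set.range (fun j => (⟨v j, hvP j⟩ : ↥P))) = ⊤ := by
      apply Submodule.map_injective_of_injective (Submodule.injective_subtype P)
      rw [Submodule.map_span, ← Set.range_comp]
      have : (P.subtype ∘ fun j => (⟨v j, hvP j⟩ : ↥P)) = v := rfl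
      rw [this, hPv, Submodule.map_top, Submodule.range_subtype]
    have hvind' : LinearIndependent L (fun j => (⟨v j, hvP j⟩ : ↥P)) :=
      linearIndependent_of_top_le_span_of_card_eq_finrank (le_of_eq hvP'.symm)
        (by simp [← heq])
    have hvind : LinearIndependent L v :=
      hvind'.map' P.subtype (Submodule.ker_subtype P)
    -- coefficients
    have hxS : ∀ i, x i ∈ Submodule.span K (Set.range v) := by
      intro i; rw [hspanKv]; exact Submodule.subset_span (Set.mem_range_self i)
    choose c hc using fun i => (mem_span_range_iff_exists_fun K).1 (hxS i)
    have hsum' : ∑ j, (∑ i, c i j • ζ i) • v j = 0 := by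
      have e1 : ∀ j ∈ Finset.univ, (∑ i, c i j • ζ i) • v j = ∑ i, (c i j • ζ i) • v j :=
        fun j _ => Finset.sum_smul
      rw [Finset.sum_congr rfl e1, Finset.sum_comm, ← hsum]
      refine Finset.sum_congr rfl fun i _ => ?_
      rw [← hc i, Finset.smul_sum]
      exact Finset.sum_congr rfl fun j _ => (aux_smul_comm _ _ _).symm
    have hcoef : ∀ j, ∑ i, c i j • ζ i = 0 :=
      Fintype.linearIndependent_iff.1 hvind (fun j => ∑ i, c i j • ζ i) hsum'
    have hc0 : ∀ i j, c i j = 0 := fun i j =>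
      Fintype.linearIndependent_iff.1 hζ (fun i => c i j) (hcoef j) i
    intro i
    rw [← hc i]
    simp [hc0]

end aux

/-- Corollary 1.36: the Delsarte dual of a maximum `h`-scattered subspace of
`𝕍(k,q^m)` (of dimension `n = km/(h+1)`, with `m ≥ h+2`) is a maximum
`(m−h−2)`-scattered subspace of `𝕍(km/(h+1) − k, q^m)`. -/
theorem statement12 {K L Vn : Type*} [Field K] [Field L] [Algebra K L]
    [Fintype K] [Fintype L]
    [AddCommGroup Vn] [Module K Vn] [Module L Vn] [IsScalarTower K L Vn]
    [FiniteDimensional L Vn]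
    (m n k h : ℕ) (hm : 0 < m) (hk : 0 < k) (hh1 : 1 ≤ h) (hhk : h ≤ k)
    (hm2 : h + 2 ≤ m)
    -- `n = km/(h+1)`, i.e. `h+1` divides `km`
    (hn : n * (h + 1) = k * m) (hkn : k < n)
    (hmL : Module.finrank K L = m) (hVn : Module.finrank L Vn = n)
    (W : Submodule K Vn) (hW : Module.finrank K ↥W = n)
    (hWstar : Module.finrank L ↥(Submodule.span L (W : Set Vn)) = n)
    (σ : Vn →ₗ[L] Vn →ₗ[L] L)
    (hσnd : LinearMap.BilinForm.Nondegenerate σ)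
    (hσrefl : LinearMap.IsRefl σ)
    (hσW : ∀ x ∈ W, ∀ y ∈ W, σ x y ∈ (algebraMap K L).range)
    (hσ'nd : ∀ x ∈ W, (∀ y ∈ W, σ x y = 0) → x = 0)
    (Γ : Submodule L Vn) (hΓ : Module.finrank L ↥Γ = n - k)
    (hΓW : Γ.restrictScalars K ⊓ W = ⊥)
    (U : Submodule K (Vn ⧸ Γ)) (hU : U = Submodule.map (Γ.mkQ.restrictScalars K) W)
    -- `U` is a maximum `h`-scattered subspace of `𝕍(k,q^m)`
    (hUspan : Submodule.span L (U : Set (Vn ⧸ Γ)) = ⊤)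
    (hUdim : Module.finrank K ↥U = n)
    (hscat : ∀ T : Submodule L (Vn ⧸ Γ), Module.finrank L ↥T = h → wt U T ≤ h)
    (Ud : Submodule K (Vn ⧸ LinearMap.BilinForm.orthogonal σ Γ))
    (hUd : Ud = Submodule.map ((LinearMap.BilinForm.orthogonal σ Γ).mkQ.restrictScalars K) W) :
    -- `U^d` is a maximum `(m−h−2)`-scattered subspace of `𝕍(n−k, q^m)`
    Module.finrank L (Vn ⧸ LinearMap.BilinForm.orthogonal σ Γ) = n - k ∧
    Submodule.span L (Ud : Set (Vn ⧸ LinearMap.BilinForm.orthogonal σ Γ)) = ⊤ ∧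
    Module.finrank K ↥Ud = n ∧
    (∀ T : Submodule L (Vn ⧸ LinearMap.BilinForm.orthogonal σ Γ),
      Module.finrank L ↥T = m - h - 2 → wt Ud T ≤ m - h - 2) := by
  haveI : FiniteDimensional K Vn := Module.Finite.trans L Vn
  have hkn' : k ≤ n := le_of_lt hkn
  -- orthogonal of top is bottom
  have horthtop : LinearMap.BilinForm.orthogonal σ ⊤ = ⊥ := by
    rw [eq_bot_iff]
    intro x hx
    have : ∀ y, σ x y = 0 := fun y => hσrefl y x (hx y trivial)
    exact hσnd.1 x this
  -- finrank of (LinearMap.BilinForm.orthogonal σ Γ)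
  have hGpdim : Module.finrank L ↥(LinearMap.BilinForm.orthogonal σ Γ) = k := by
    have := LinearMap.BilinForm.finrank_add_finrank_orthogonal hσrefl Γ
    rw [horthtop, inf_bot_eq, finrank_bot, hΓ, hVn] at this
    omega
  have goal1 : Module.finrank L (Vn ⧸ (LinearMap.BilinForm.orthogonal σ Γ)) = n - k := by
    have := Submodule.finrank_quotient_add_finrank (LinearMap.BilinForm.orthogonal σ Γ)
    rw [hGpdim, hVn] at this
    omega
  -- span of W is everything
  have hWtop : Submodule.span L (W : Set Vn) = ⊤ :=
    Submodule.eq_top_of_finrank_eq (by rw [hWstar, hVn])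
  have goal2 : Submodule.span L (Ud : Set (Vn ⧸ (LinearMap.BilinForm.orthogonal σ Γ))) = ⊤ := by
    rw [hUd]
    have himg : (Submodule.map ((LinearMap.BilinForm.orthogonal σ Γ).mkQ.restrictScalars K) W : Set (Vn ⧸ (LinearMap.BilinForm.orthogonal σ Γ)))
        = (LinearMap.BilinForm.orthogonal σ Γ).mkQ '' (W : Set Vn) := rfl
    rw [himg, Submodule.span_image, hWtop, Submodule.map_top, Submodule.range_mkQ]
  -- basis of W, which is an L-basis of Vn
  obtain ⟨bV, hbVW, hbVrepr⟩ :
      ∃ bV : Basis (Fin n) L Vn, (∀ j, bV j ∈ W) ∧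
        (∀ w ∈ W, ∀ j, bV.repr w j ∈ (algebraMap K L).range) := by
    let bW := Module.finBasisOfFinrankEq K ↥W hW
    let e : Fin n → Vn := fun j => (bW j : Vn)
    have heW : ∀ j, e j ∈ W := fun j => (bW j).2
    have hspanKe : Submodule.span K (Set.range e) = W := by
      have : e = W.subtype ∘ bW := rfl
      rw [this, Set.range_comp, Submodule.span_image, bW.span_eq, Submodule.map_top,
        Submodule.range_subtype]
    have hWsub : (W : Set Vn) ⊆ (Submodule.span L (Set.range e) : Set Vn) := by
      intro x hx
      rw [← hspanKe] at hx
      exact Submodule.span_le_restrictScalars K L (Set.range e) hx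
    have hspan : ⊤ ≤ Submodule.span L (Set.range e) := by
      rw [← hWtop]
      exact Submodule.span_le.2 hWsub
    have heind : LinearIndependent L e :=
      linearIndependent_of_top_le_span_of_card_eq_finrank hspan (by simp [hVn])
    let bV := Basis.mk heind hspan
    have hbVapp : ∀ j, bV j = e j := fun j => Basis.mk_apply heind hspan j
    refine ⟨bV, fun j => (hbVapp j) ▸ heW j, ?_⟩
    intro w hw j
    have hrep : w = ∑ j', algebraMap K L (bW.repr ⟨w, hw⟩ j') • bV j' := by
      have h1 : ∑ j', bW.repr ⟨w, hw⟩ j' • bW j' = (⟨w, hw⟩ : ↥W) := bW.sum_repr ⟨w, hw⟩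
      have h2 := congrArg (W.subtype) h1
      rw [map_sum] at h2
      simp only [map_smul, Submodule.coe_subtype] at h2
      have h3 : ∀ j' ∈ Finset.univ, algebraMap K L (bW.repr ⟨w, hw⟩ j') • bV j'
          = bW.repr ⟨w, hw⟩ j' • (bW j' : Vn) := by
        intro j' _
        rw [algebraMap_smul, hbVapp j']
      rw [Finset.sum_congr rfl h3]
      exact h2.symm
    rw [hrep]
    have := bV.repr_sum_self (fun j' => algebraMap K L (bW.repr ⟨w, hw⟩ j'))
    rw [congrFun this j]
    exact ⟨_, rfl⟩
  -- h < k
  have hQdim : Module.finrank L (Vn ⧸ Γ) = k := by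
    have := Submodule.finrank_quotient_add_finrank Γ
    rw [hΓ, hVn] at this
    omega
  have hklt : h < k := by
    rcases lt_or_eq_of_le hhk with hlt | heq
    · exact hlt
    · exfalso
      have htop : Module.finrank L (⊤ : Submodule L (Vn ⧸ Γ)) = h := by
        rw [finrank_top, hQdim, heq]
      have := hscat ⊤ htop
      unfold wt at this
      rw [Submodule.restrictScalars_top, inf_top_eq, hUdim] at this
      omega
  -- MAIN CLAIM
  have hkltQ : h < Module.finrank L (Vn ⧸ Γ) := by rw [hQdim]; exact hklt
  have claim : ∀ (r : ℕ), r ≤ m - h - 1 → ∀ (μ : Fin r → L) (w : Fin r → Vn),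
      (∀ i, w i ∈ W) → (∑ i, μ i • w i) ∈ (LinearMap.BilinForm.orthogonal σ Γ) → ∑ i, μ i • w i = 0 := by
    intro r hr μ w hwW hv
    haveI := Classical.decEq L
    set v := ∑ i, μ i • w i with hvdef
    -- the coefficient space Z
    have hZ0le : Module.finrank K ↥(Submodule.span K (Set.range μ)) ≤ m - h - 1 := by
      refine le_trans (le_trans (finrank_span_le_card _) ?_) hr
      rw [Set.toFinset_range]
      exact le_trans (Finset.card_image_le) (by simp)
    obtain ⟨Z, hZ0Z, hZdim⟩ := aux_exists_superspace (m - h - 1 -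
        Module.finrank K ↥(Submodule.span K (Set.range μ))) (m - h - 1)
        (Submodule.span K (Set.range μ)) rfl hZ0le (by rw [hmL]; omega)
    have hμZ : ∀ i, μ i ∈ Z := fun i => hZ0Z (Submodule.subset_span (Set.mem_range_self i))
    -- the trace-orthogonal complement of Z
    set Ztil := (LinearMap.BilinForm.orthogonal (Algebra.traceForm K L) Z) with hZtildef
    have htrtop : LinearMap.BilinForm.orthogonal (Algebra.traceForm K L) ⊤ = ⊥ := by
      rw [eq_bot_iff]
      intro x hx
      have : x = 0 := by
        apply aux_trace_ne K L
        intro θ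
        have h1 := hx θ trivial
        rw [Algebra.traceForm_apply] at h1
        exact h1
      simp [this]
    have hZtil : Module.finrank K ↥Ztil = h + 1 := by
      have := LinearMap.BilinForm.finrank_add_finrank_orthogonal
        (Algebra.traceForm_isSymm (R := K) (S := L)).isRefl Z
      rw [htrtop, inf_bot_eq, finrank_bot, hZdim, hmL, ← hZtildef] at this
      omega
    have hZtilor : ∀ z ∈ Ztil, ∀ zz ∈ Z, Algebra.trace K L (z * zz) = 0 := by
      intro z hz zz hzz
      have h1 := hz zz hzz
      rw [Algebra.traceForm_apply] at h1
      rwa [mul_comm]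
    -- basis of Ztil
    let bZ := Module.finBasisOfFinrankEq K ↥Ztil hZtil
    let ζ : Fin (h + 1) → L := fun t => (bZ t : L)
    have hζmem : ∀ t, ζ t ∈ Ztil := fun t => (bZ t).2
    have hζind : LinearIndependent K ζ :=
      bZ.linearIndependent.map' Ztil.subtype (Submodule.ker_subtype _)
    -- the space D = Ztil ⬝ W
    let Φ : (Fin n → ↥Ztil) →ₗ[K] Vn :=
      { toFun := fun f => ∑ j, (f j : L) • bV j
        map_add' := fun f g => by
          simp only [Pi.add_apply, Submodule.coe_add, add_smul, Finset.sum_add_distrib]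
        map_smul' := fun a f => by
          simp only [Pi.smul_apply, SetLike.val_smul, RingHom.id_apply, Finset.smul_sum]
          exact Finset.sum_congr rfl fun j _ => smul_assoc a _ _ }
    have hΦker : LinearMap.ker Φ = ⊥ := by
      rw [LinearMap.ker_eq_bot']
      intro f hf
      have : ∀ j, (f j : L) = 0 :=
        Fintype.linearIndependent_iff.1 bV.linearIndependent (fun j => (f j : L)) hf
      funext j
      exact Subtype.ext (this j)
    have hDdim : Module.finrank K ↥(LinearMap.range Φ) = n * (h + 1) := by
      have h1 := LinearMap.finrank_range_add_finrank_ker Φ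
      rw [hΦker, finrank_bot] at h1
      have h2 : Module.finrank K (Fin n → ↥Ztil) = n * (h + 1) := by
        rw [Module.finrank_pi_fintype]
        simp [hZtil, Finset.sum_const, mul_comm]
      omega
    -- D ∩ Γ = 0  (uses h-scatteredness via keydep)
    have hDΓ : ∀ γ ∈ Γ, γ ∈ LinearMap.range Φ → γ = 0 := by
      rintro γ hγΓ ⟨f, rfl⟩
      set c : Fin n → Fin (h + 1) → K := fun j t => bZ.repr (f j) t with hcdef
      have hfj : ∀ j, (f j : L) = ∑ t, c j t • ζ t := by
        intro j
        have h1 := bZ.sum_repr (f j)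
        have h2 := congrArg (Ztil.subtype) h1
        rw [map_sum] at h2
        simp only [map_smul, Submodule.coe_subtype] at h2
        exact h2.symm
      set a : Fin (h + 1) → Vn := fun t => ∑ j, c j t • bV j with hadef
      have haW : ∀ t, a t ∈ W :=
        fun t => Submodule.sum_mem W fun j _ => Submodule.smul_mem W _ (hbVW j)
      have hγa : Φ f = ∑ t, ζ t • a t := by
        show ∑ j, (f j : L) • bV j = _
        have e1 : ∀ j ∈ Finset.univ, (f j : L) • bV j = ∑ t, ζ t • (c j t • bV j) := by
          intro j _
          rw [hfj j, Finset.sum_smul]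
          exact Finset.sum_congr rfl fun t _ => (aux_smul_comm _ _ _).symm
        rw [Finset.sum_congr rfl e1, Finset.sum_comm]
        exact Finset.sum_congr rfl fun t _ => (Finset.smul_sum).symm
      have hx : ∀ t, Γ.mkQ (a t) ∈ U := by
        intro t
        rw [hU]
        exact ⟨a t, haW t, rfl⟩
      have hsum : ∑ t, ζ t • Γ.mkQ (a t) = 0 := by
        have : Γ.mkQ (Φ f) = 0 := (Submodule.Quotient.mk_eq_zero Γ).2 hγΓ
        rw [hγa, map_sum] at this
        simpa only [map_smul] using this
      have hx0 := aux_keydep h U hUspan hkltQ hscat (le_refl (h + 1)) ζ hζind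
        (fun t => Γ.mkQ (a t)) hx hsum
      have ha0 : ∀ t, a t = 0 := by
        intro t
        have h1 : a t ∈ Γ := (Submodule.Quotient.mk_eq_zero Γ).1 (hx0 t)
        have h2 : a t ∈ Γ.restrictScalars K ⊓ W := ⟨h1, haW t⟩
        rw [hΓW] at h2
        exact h2
      rw [hγa]
      simp only [ha0, smul_zero, Finset.sum_const_zero]
    -- Γ ⊔ D = ⊤
    have hinf : Γ.restrictScalars K ⊓ LinearMap.range Φ = ⊥ := by
      rw [eq_bot_iff]
      rintro x ⟨hx1, hx2⟩
      have : x = 0 := hDΓ x hx1 hx2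
      simp [this]
    have hΓKdim : Module.finrank K ↥(Γ.restrictScalars K) = m * (n - k) := by
      have h1 : Module.finrank K L * Module.finrank L ↥Γ = Module.finrank K ↥Γ :=
        Module.finrank_mul_finrank K L ↥Γ
      rw [hmL, hΓ] at h1
      have h2 : Module.finrank K ↥(Γ.restrictScalars K) = Module.finrank K ↥Γ := rfl
      rw [h2, ← h1]
    have hVndim : Module.finrank K Vn = m * n := by
      have h1 : Module.finrank K L * Module.finrank L Vn = Module.finrank K Vn :=
        Module.finrank_mul_finrank K L Vn
      rw [hmL, hVn] at h1
      exact h1.symm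
    have harith : m * (n - k) + n * (h + 1) = m * n := by
      have h1 : m * (n - k) + m * k = m * n := by
        rw [← Nat.mul_add, Nat.sub_add_cancel hkn']
      rw [hn, mul_comm k m]
      omega
    have htop : Γ.restrictScalars K ⊔ LinearMap.range Φ = ⊤ := by
      apply Submodule.eq_top_of_finrank_eq
      have h5 := Submodule.finrank_sup_add_finrank_inf_eq (Γ.restrictScalars K) (LinearMap.range Φ)
      rw [hinf, finrank_bot, hΓKdim, hDdim] at h5
      rw [hVndim]
      omega
    -- the trace functional kills everything
    let F : Vn →ₗ[K] K := (Algebra.trace K L).comp ((σ.flip v).restrictScalars K)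
    have hFΓ : ∀ γ ∈ Γ, F γ = 0 := by
      intro γ hγ
      have : σ γ v = 0 := hv γ hγ
      show Algebra.trace K L (σ γ v) = 0
      rw [this, map_zero]
    have hσuvZ : ∀ u ∈ W, σ u v ∈ Z := by
      intro u hu
      rw [hvdef, map_sum]
      refine Submodule.sum_mem Z fun i _ => ?_
      rw [map_smul]
      obtain ⟨ki, hki⟩ := hσW u hu (w i) (hwW i)
      have he : μ i • (σ u) (w i) = ki • μ i := by
        rw [← hki, smul_eq_mul, mul_comm, ← Algebra.smul_def]
      rw [he]
      exact Submodule.smul_mem Z ki (hμZ i)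
    have hFD : ∀ y ∈ LinearMap.range Φ, F y = 0 := by
      rintro y ⟨f, rfl⟩
      show Algebra.trace K L (σ (∑ j, (f j : L) • bV j) v) = 0
      have e0 : σ (∑ j, (f j : L) • bV j) v = ∑ j, (f j : L) * σ (bV j) v := by
        rw [map_sum σ, LinearMap.sum_apply]
        exact Finset.sum_congr rfl fun j _ => by
          rw [map_smul, LinearMap.smul_apply, smul_eq_mul]
      rw [e0, map_sum]
      refine Finset.sum_eq_zero fun j _ => ?_
      exact hZtilor (f j : L) (f j).2 (σ (bV j) v) (hσuvZ (bV j) (hbVW j))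
    have hF0 : ∀ x : Vn, F x = 0 := by
      intro x
      have hx : x ∈ Γ.restrictScalars K ⊔ LinearMap.range Φ := htop ▸ Submodule.mem_top
      obtain ⟨γ, hγ, d, hd, rfl⟩ := Submodule.mem_sup.1 hx
      rw [map_add, hFΓ γ hγ, hFD d hd, add_zero]
    have hσv0 : ∀ x : Vn, σ x v = 0 := by
      intro x
      apply aux_trace_ne K L
      intro θ
      have : F (θ • x) = 0 := hF0 (θ • x)
      show Algebra.trace K L (θ * σ x v) = 0
      rw [← smul_eq_mul, ← LinearMap.smul_apply, ← map_smul σ θ x]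
      exact this
    exact hσnd.1 v fun y => hσrefl y v (hσv0 y)
  -- W ∩ (LinearMap.BilinForm.orthogonal σ Γ) = 0 as K-submodules
  have hWGp : ∀ x ∈ W, x ∈ (LinearMap.BilinForm.orthogonal σ Γ) → x = 0 := by
    intro x hxW hxGp
    have h1 : (1:ℕ) ≤ m - h - 1 := by omega
    have := claim 1 h1 (fun _ => (1:L)) (fun _ => x) (fun _ => hxW)
    simp only [Fin.sum_univ_one, one_smul] at this
    exact this hxGp
  -- goal 3
  have goal3 : Module.finrank K ↥Ud = n := by
    set g := ((LinearMap.BilinForm.orthogonal σ Γ).mkQ.restrictScalars K).comp W.subtype with hgdef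
    have hrange : LinearMap.range g = Submodule.map
        ((LinearMap.BilinForm.orthogonal σ Γ).mkQ.restrictScalars K) W := by
      rw [hgdef, LinearMap.range_comp, Submodule.range_subtype]
    have hker : LinearMap.ker g = ⊥ := by
      rw [eq_bot_iff]
      intro x hx
      have h1 : (x : Vn) ∈ LinearMap.BilinForm.orthogonal σ Γ := by
        have : (LinearMap.BilinForm.orthogonal σ Γ).mkQ (x : Vn) = 0 := hx
        exact (Submodule.Quotient.mk_eq_zero _).1 this
      have h2 : (x : Vn) = 0 := hWGp (x : Vn) x.2 h1
      have h3 : x = 0 := by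
        apply Subtype.ext
        exact h2
      rw [h3]
      exact Submodule.zero_mem ⊥
    have h3 := LinearMap.finrank_range_add_finrank_ker g
    rw [hker, finrank_bot, hrange, hW] at h3
    rw [hUd]
    omega
  refine ⟨goal1, goal2, goal3, ?_⟩
  -- goal 4
  intro T hT
  by_contra hcon
  push_neg at hcon
  unfold wt at hcon
  have hwtge : m - h - 1 ≤ Module.finrank K
      ↥(Ud ⊓ T.restrictScalars K) := by omega
  set X := Ud ⊓ T.restrictScalars K with hXdef
  -- pick m-h-1 K-independent vectors in X
  let bX := Module.finBasis K ↥X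
  have hcard : m - h - 1 ≤ Module.finrank K ↥X := hwtge
  let y : Fin (m - h - 1) → Vn ⧸ LinearMap.BilinForm.orthogonal σ Γ :=
    fun i => (bX (Fin.castLE hcard i) : Vn ⧸ LinearMap.BilinForm.orthogonal σ Γ)
  have hyX : ∀ i, y i ∈ X := fun i => (bX (Fin.castLE hcard i)).2
  have hyind : LinearIndependent K y := by
    have h1 : LinearIndependent K (fun i => bX (Fin.castLE hcard i)) :=
      bX.linearIndependent.comp (Fin.castLE hcard) (Fin.castLE_injective hcard)
    exact h1.map' X.subtype (Submodule.ker_subtype X)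
  -- y is L-dependent since it lies in T of dimension m-h-2
  have hydep : ¬ LinearIndependent L y := by
    intro hind
    have h1 : LinearIndependent L (fun i => (⟨y i, ((hyX i).2 : y i ∈ T)⟩ : ↥T)) := by
      apply LinearIndependent.of_comp T.subtype
      exact hind
    have h2 := h1.fintype_card_le_finrank
    rw [hT, Fintype.card_fin] at h2
    omega
  obtain ⟨μ, hμsum, i0, hμi0⟩ := Fintype.not_linearIndependent_iff.1 hydep
  -- lift y to W
  have hyUd : ∀ i, y i ∈ Ud := fun i => (hyX i).1
  have hlift : ∀ i, ∃ x ∈ W, (LinearMap.BilinForm.orthogonal σ Γ).mkQ x = y i := by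
    intro i
    have := hyUd i
    rw [hUd] at this
    obtain ⟨x, hx1, hx2⟩ := this
    exact ⟨x, hx1, hx2⟩
  choose w' hw'W hw'eq using hlift
  -- the combination lies in the orthogonal
  have hcomb : (∑ i, μ i • w' i) ∈ LinearMap.BilinForm.orthogonal σ Γ := by
    rw [← Submodule.Quotient.mk_eq_zero (LinearMap.BilinForm.orthogonal σ Γ)]
    have : (LinearMap.BilinForm.orthogonal σ Γ).mkQ (∑ i, μ i • w' i)
        = ∑ i, μ i • y i := by
      rw [map_sum]
      exact Finset.sum_congr rfl fun i _ => by rw [map_smul, hw'eq]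
    show (LinearMap.BilinForm.orthogonal σ Γ).mkQ (∑ i, μ i • w' i) = 0
    rw [this, hμsum]
  have hzero : ∑ i, μ i • w' i = 0 := claim (m - h - 1) le_rfl μ w' hw'W hcomb
  -- w' is K-independent, hence L-independent by the subgeometry property
  have hw'ind : LinearIndependent K w' := by
    apply LinearIndependent.of_comp ((LinearMap.BilinForm.orthogonal σ Γ).mkQ.restrictScalars K)
    have he : (⇑((LinearMap.BilinForm.orthogonal σ Γ).mkQ.restrictScalars K) ∘ w') = y := by
      funext i
      exact hw'eq i
    rw [he]
    exact hyind
  have hw'indL : LinearIndependent L w' := aux_subgeo_indep bV W hbVrepr w' hw'W hw'ind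
  exact hμi0 (Fintype.linearIndependent_iff.1 hw'indL μ hzero i0)
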